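/- If f ∈ ℝ⟨X⟩ is cyclically equivalent (over ℂ⟨X⟩) to an element of M_ℂ, then f is cyclically equivalent (over ℝ⟨X⟩) to an element of M_ℝ. -/

import Mathlib

abbrev NCPoly (k : Type) [CommSemiring k] (n : ℕ) := MonoidAlgebra k (FreeMonoid (Fin n))

noncomputable def ncWord (k : Type) [CommSemiring k] {n : ℕ} (w : FreeMonoid (Fin n)) : NCPoly k n :=
  MonoidAlgebra.of k (FreeMonoid (Fin n)) w

noncomputable def ncX (k : Type) [CommSemiring k] {n : ℕ} (i : Fin n) : NCPoly k n :=
  ncWord k (FreeMonoid.of i)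

/-- The involution on `k⟨X⟩` fixing the variables and conjugating coefficients. -/
noncomputable def ncStar {k : Type} [CommSemiring k] [StarRing k] {n : ℕ} (f : NCPoly k n) : NCPoly k n :=
  MonoidAlgebra.ofCoeff (Finsupp.mapDomain FreeMonoid.reverse (Finsupp.mapRange star (star_zero k) f.coeff))

/-- `f` and `g` are cyclically equivalent: `f - g` is a sum of commutators. -/
def IsCyclicEquiv {k : Type} [CommRing k] {n : ℕ} (f g : NCPoly k n) : Prop :=
  f - g ∈ AddSubmonoid.closure {x : NCPoly k n | ∃ p q, x = p * q - q * p}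

/-- The quadratic module generated by the `1 - X_i^2`: all finite sums of
elements `g* g` and `g* (1 - X_i^2) g`. -/
noncomputable def QuadMod (k : Type) [CommRing k] [StarRing k] (n : ℕ) : AddSubmonoid (NCPoly k n) :=
  AddSubmonoid.closure
    ({x | ∃ g : NCPoly k n, x = ncStar g * g} ∪
     {x | ∃ (g : NCPoly k n) (i : Fin n), x = ncStar g * (1 - (ncX k i) ^ 2) * g})

/-- Evaluation of a noncommutative polynomial at a tuple of matrices. -/
noncomputable def ncEval {k : Type} [CommRing k] {n s : ℕ}
    (A : Fin n → Matrix (Fin s) (Fin s) k) :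
    NCPoly k n →ₐ[k] Matrix (Fin s) (Fin s) k :=
  MonoidAlgebra.lift (R := k) (M := FreeMonoid (Fin n)) (A := Matrix (Fin s) (Fin s) k) (FreeMonoid.lift A)

/-- A self-adjoint contraction matrix: `A* = A` and `1 - A²` positive semidefinite. -/
def IsSAContraction {k : Type} [CommRing k] [StarRing k] [PartialOrder k] [StarOrderedRing k]
    {s : ℕ} (A : Matrix (Fin s) (Fin s) k) : Prop :=
  A.IsHermitian ∧ (1 - A * A).PosSemidef

/-- The natural inclusion `ℝ⟨X⟩ → ℂ⟨X⟩`. -/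
noncomputable def toC {n : ℕ} : NCPoly ℝ n →ₐ[ℝ] NCPoly ℂ n :=
  MonoidAlgebra.lift (R := ℝ) (M := FreeMonoid (Fin n)) (A := NCPoly ℂ n) (MonoidAlgebra.of ℂ (FreeMonoid (Fin n)))
noncomputable def Rre {n : ℕ} (h : NCPoly ℂ n) : NCPoly ℝ n :=
  MonoidAlgebra.ofCoeff (Finsupp.mapRange Complex.re Complex.zero_re h.coeff)

noncomputable def Rim {n : ℕ} (h : NCPoly ℂ n) : NCPoly ℝ n :=
  MonoidAlgebra.ofCoeff (Finsupp.mapRange Complex.im Complex.zero_im h.coeff)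

lemma toC_eq {n : ℕ} (a : NCPoly ℝ n) :
    toC a = MonoidAlgebra.ofCoeff (Finsupp.mapRange (Complex.ofReal) Complex.ofReal_zero a.coeff) := by
  induction a using MonoidAlgebra.induction_linear with
  | zero => simp
  | add x y hx hy => rw [map_add, hx, hy, MonoidAlgebra.coeff_add, Finsupp.mapRange_add (by simp), MonoidAlgebra.ofCoeff_add]
  | single w c =>
      rw [MonoidAlgebra.coeff_single, Finsupp.mapRange_single, MonoidAlgebra.ofCoeff_single]
      show MonoidAlgebra.lift ℝ (NCPoly ℂ n) (FreeMonoid (Fin n)) _ (MonoidAlgebra.single w c) = _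
      rw [MonoidAlgebra.lift_single, MonoidAlgebra.of_apply, MonoidAlgebra.smul_single]
      norm_num [Complex.real_smul]

lemma Rre_zero {n : ℕ} : Rre (0 : NCPoly ℂ n) = 0 := by
  ext w; simp [Rre]

lemma Rre_add {n : ℕ} (x y : NCPoly ℂ n) : Rre (x + y) = Rre x + Rre y := by
  simp only [Rre, MonoidAlgebra.coeff_add, Finsupp.mapRange_add Complex.add_re, MonoidAlgebra.ofCoeff_add]

lemma Rre_neg {n : ℕ} (x : NCPoly ℂ n) : Rre (-x) = -Rre x := by
  ext w
  simp [Rre, Finsupp.mapRange_apply]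

lemma Rre_sub {n : ℕ} (x y : NCPoly ℂ n) : Rre (x - y) = Rre x - Rre y := by
  rw [sub_eq_add_neg, Rre_add, Rre_neg, sub_eq_add_neg]

lemma Rre_toC {n : ℕ} (a : NCPoly ℝ n) : Rre (toC a) = a := by
  rw [toC_eq]; ext w; simp [Rre, Finsupp.mapRange_apply]

lemma Rre_I_smul_toC {n : ℕ} (a : NCPoly ℝ n) : Rre (Complex.I • toC a) = 0 := by
  rw [toC_eq]
  ext w
  simp [Rre, Finsupp.mapRange_apply, smul_eq_mul]

lemma Rre_decomp {n : ℕ} (x y : NCPoly ℝ n) : Rre (toC x + Complex.I • toC y) = x := by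
  rw [Rre_add, Rre_toC, Rre_I_smul_toC, add_zero]

lemma decomp {n : ℕ} (g : NCPoly ℂ n) : g = toC (Rre g) + Complex.I • toC (Rim g) := by
  rw [toC_eq, toC_eq]
  ext w
  simp only [Rre, Rim, MonoidAlgebra.coeff_add, MonoidAlgebra.coeff_smul, MonoidAlgebra.coeff_ofCoeff,
    Finsupp.add_apply, Finsupp.smul_apply, Finsupp.mapRange_apply, smul_eq_mul]
  rw [mul_comm]
  exact (Complex.re_add_im _).symm

lemma prod_decomp {n : ℕ} (a b c d : NCPoly ℝ n) :
    (toC a + Complex.I • toC b) * (toC c + Complex.I • toC d)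
      = toC (a * c - b * d) + Complex.I • toC (a * d + b * c) := by
  simp only [map_sub, map_add, map_mul, add_mul, mul_add, smul_mul_assoc, mul_smul_comm,
    smul_smul, Complex.I_mul_I, neg_smul, one_smul, smul_add]
  module

lemma ncStar_toC {n : ℕ} (a : NCPoly ℝ n) : ncStar (toC a) = toC (ncStar a) := by
  unfold ncStar
  rw [toC_eq, toC_eq]
  simp only [MonoidAlgebra.coeff_ofCoeff]
  have h1 : Finsupp.mapRange star (star_zero ℂ) (Finsupp.mapRange Complex.ofReal Complex.ofReal_zero a.coeff)
      = Finsupp.mapRange Complex.ofReal Complex.ofReal_zero (Finsupp.mapRange star (star_zero ℝ) a.coeff) := by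
    ext w; simp [Finsupp.mapRange_apply, Complex.star_def, Complex.conj_ofReal]
  rw [h1, Finsupp.mapDomain_mapRange _ _ Complex.ofReal _ (by intro x y; push_cast; ring)]

lemma ncStar_smul {n : ℕ} (c : ℂ) (x : NCPoly ℂ n) : ncStar (c • x) = star c • ncStar x := by
  unfold ncStar
  rw [MonoidAlgebra.coeff_smul, ← MonoidAlgebra.ofCoeff_smul, ← Finsupp.mapDomain_smul]
  refine congrArg _ (congrArg _ ?_)
  ext w
  simp [Finsupp.mapRange_apply, smul_eq_mul]

lemma ncStar_add {k : Type} [CommSemiring k] [StarRing k] {n : ℕ} (x y : NCPoly k n) :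
    ncStar (x + y) = ncStar x + ncStar y := by
  unfold ncStar
  rw [MonoidAlgebra.coeff_add, Finsupp.mapRange_add star_add, Finsupp.mapDomain_add, MonoidAlgebra.ofCoeff_add]

lemma ncStar_toCab {n : ℕ} (a b : NCPoly ℝ n) :
    ncStar (toC a + Complex.I • toC b)
      = toC (ncStar a) + Complex.I • toC (-(ncStar b)) := by
  rw [ncStar_add, ncStar_smul, ncStar_toC, ncStar_toC]
  simp [Complex.conj_I, map_neg]

lemma toC_ncX {n : ℕ} (i : Fin n) : toC (ncX ℝ i) = ncX ℂ i := by
  unfold ncX ncWord toC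
  exact MonoidAlgebra.lift_of (R := ℝ) (A := NCPoly ℂ n) _ _

lemma toC_M {n : ℕ} (i : Fin n) : (1 : NCPoly ℂ n) - ncX ℂ i ^ 2 = toC (1 - ncX ℝ i ^ 2) := by
  rw [map_sub, map_one, map_pow, toC_ncX]

lemma quad1 {n : ℕ} (a b : NCPoly ℝ n) :
    Rre (ncStar (toC a + Complex.I • toC b) * (toC a + Complex.I • toC b))
      = ncStar a * a + ncStar b * b := by
  rw [ncStar_toCab, prod_decomp, Rre_decomp]
  simp [neg_mul, sub_neg_eq_add]

lemma quad2 {n : ℕ} (a b m : NCPoly ℝ n) :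
    Rre (ncStar (toC a + Complex.I • toC b) * toC m * (toC a + Complex.I • toC b))
      = ncStar a * m * a + ncStar b * m * b := by
  rw [ncStar_toCab]
  have h1 : (toC (ncStar a) + Complex.I • toC (-(ncStar b))) * toC m
      = toC (ncStar a * m) + Complex.I • toC (-(ncStar b) * m) := by
    have := prod_decomp (ncStar a) (-(ncStar b)) m 0
    simpa using this
  rw [h1, prod_decomp, Rre_decomp]
  simp [neg_mul, sub_neg_eq_add]

lemma comm_re {n : ℕ} (a b c d : NCPoly ℝ n) :
    Rre ((toC a + Complex.I • toC b) * (toC c + Complex.I • toC d)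
        - (toC c + Complex.I • toC d) * (toC a + Complex.I • toC b))
      = (a * c - c * a) + (d * b - b * d) := by
  rw [prod_decomp, prod_decomp, Rre_sub, Rre_decomp, Rre_decomp]
  abel

theorem stmt12 {n : ℕ} (f : NCPoly ℝ n)
    (h : ∃ h ∈ QuadMod ℂ n, IsCyclicEquiv (toC f) h) :
    ∃ g ∈ QuadMod ℝ n, IsCyclicEquiv f g := by
  obtain ⟨h0, hmem, hcyc⟩ := h
  refine ⟨Rre h0, ?_, ?_⟩
  · clear hcyc
    induction hmem using AddSubmonoid.closure_induction with
    | mem x hx =>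
        rcases hx with ⟨g, rfl⟩ | ⟨g, i, rfl⟩
        · rw [decomp g, quad1]
          exact add_mem (AddSubmonoid.subset_closure (Or.inl ⟨_, rfl⟩))
            (AddSubmonoid.subset_closure (Or.inl ⟨_, rfl⟩))
        · rw [decomp g, toC_M, quad2]
          exact add_mem (AddSubmonoid.subset_closure (Or.inr ⟨_, i, rfl⟩))
            (AddSubmonoid.subset_closure (Or.inr ⟨_, i, rfl⟩))
    | zero => rw [Rre_zero]; exact zero_mem _
    | add x y hx hy ihx ihy => rw [Rre_add]; exact add_mem ihx ihy
  · have key : f - Rre h0 = Rre (toC f - h0) := by rw [Rre_sub, Rre_toC]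
    unfold IsCyclicEquiv at hcyc ⊢
    rw [key]
    have main : ∀ z : NCPoly ℂ n,
        z ∈ AddSubmonoid.closure {x : NCPoly ℂ n | ∃ p q, x = p * q - q * p} →
        Rre z ∈ AddSubmonoid.closure {x : NCPoly ℝ n | ∃ p q, x = p * q - q * p} := by
      intro z hz
      induction hz using AddSubmonoid.closure_induction with
      | mem x hx =>
          obtain ⟨p, q, rfl⟩ := hx
          rw [decomp p, decomp q, comm_re]
          exact add_mem (AddSubmonoid.subset_closure ⟨_, _, rfl⟩)
            (AddSubmonoid.subset_closure ⟨_, _, rfl⟩)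
      | zero => rw [Rre_zero]; exact zero_mem _
      | add x y hx hy ihx ihy => rw [Rre_add]; exact add_mem ihx ihy
    exact main _ hcyc
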